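/- Let K be a field, Λ a finite-dimensional K-algebra, and let 0 → A →f B →g U → 0 be an almost split sequence of finite-dimensional left Λ-modules in which U is uniserial. If B is the internal direct sum of a family (Bᵢ)_{i ∈ I} of indecomposable submodules, then the cardinality of I is at most length(soc A) + 1, where length denotes composition length. -/

import Mathlib

/-- A module is *uniserial* if its submodules are totally ordered by inclusion. -/
def IsUniserialModule (R M : Type) [Ring R] [AddCommGroup M] [Module R M] : Prop :=
  ∀ N₁ N₂ : Submodule R M, N₁ ≤ N₂ ∨ N₂ ≤ N₁

/-- The Jacobson radical of the ring `R` (the intersection of the maximal left ideals). -/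
noncomputable def ringJacobson (R : Type) [Ring R] : Ideal R :=
  Ideal.jacobson (⊥ : Ideal R)

/-- The submodule `J•M`, where `J` is the Jacobson radical of `R`. -/
noncomputable def radicalSubmodule (R M : Type) [Ring R] [AddCommGroup M] [Module R M] :
    Submodule R M :=
  ringJacobson R • (⊤ : Submodule R M)

/-- The socle of a module: the sum of all of its simple submodules. -/
def socle (R M : Type) [Ring R] [AddCommGroup M] [Module R M] : Submodule R M :=
  sSup {N : Submodule R M | IsSimpleModule R ↥N}

/-- A linear map is a split monomorphism if it has a left inverse. -/
def IsSplitMono {R M N : Type} [Ring R] [AddCommGroup M] [Module R M]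
    [AddCommGroup N] [Module R N] (f : M →ₗ[R] N) : Prop :=
  ∃ g : N →ₗ[R] M, g ∘ₗ f = LinearMap.id

/-- A linear map is a split epimorphism if it has a right inverse. -/
def IsSplitEpi {R M N : Type} [Ring R] [AddCommGroup M] [Module R M]
    [AddCommGroup N] [Module R N] (f : M →ₗ[R] N) : Prop :=
  ∃ g : N →ₗ[R] M, f ∘ₗ g = LinearMap.id

/-- A linear map `f : M → N` is *irreducible* if it is neither a split monomorphism nor a
split epimorphism, and in any factorization `f = g ∘ h`, either `h` is a split monomorphism
or `g` is a split epimorphism. -/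
def IsIrreducibleMap {R M N : Type} [Ring R] [AddCommGroup M] [Module R M]
    [AddCommGroup N] [Module R N] (f : M →ₗ[R] N) : Prop :=
  ¬ IsSplitMono f ∧ ¬ IsSplitEpi f ∧
    ∀ (X : Type) [AddCommGroup X] [Module R X] (h : M →ₗ[R] X) (g : X →ₗ[R] N),
      g ∘ₗ h = f → IsSplitMono h ∨ IsSplitEpi g

/-- A module is *indecomposable* if it is nonzero and is not the internal direct sum of two
nonzero submodules. -/
def IsIndecomposableModule (R M : Type) [Ring R] [AddCommGroup M] [Module R M] : Prop :=
  Nontrivial M ∧ ∀ N₁ N₂ : Submodule R M, IsCompl N₁ N₂ → N₁ = ⊥ ∨ N₂ = ⊥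

/-- The composition length of a module, as the Krull dimension of its lattice of
submodules (the supremum of the lengths of strictly increasing chains of submodules). -/
noncomputable def moduleLength (R M : Type) [Ring R] [AddCommGroup M] [Module R M] :
    WithBot ℕ∞ :=
  Order.krullDim (Submodule R M)

/-- `0 → A →f B →g C → 0` is an *almost split sequence* if it is a non-split short exact
sequence, `A` and `C` are indecomposable, and every linear map `h : X → C` which is not a
split epimorphism factors through `g`. -/
def IsAlmostSplitSequence {Λ A B C : Type} [Ring Λ]
    [AddCommGroup A] [Module Λ A] [AddCommGroup B] [Module Λ B]
    [AddCommGroup C] [Module Λ C]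
    (f : A →ₗ[Λ] B) (g : B →ₗ[Λ] C) : Prop :=
  Function.Injective f ∧ Function.Surjective g ∧ LinearMap.range f = LinearMap.ker g ∧
    ¬ IsSplitEpi g ∧ IsIndecomposableModule Λ A ∧ IsIndecomposableModule Λ C ∧
    ∀ (X : Type) [AddCommGroup X] [Module Λ X] (h : X →ₗ[Λ] C),
      ¬ IsSplitEpi h → ∃ h' : X →ₗ[Λ] B, g ∘ₗ h' = h


section AuxBoundProof

variable {Λ B U : Type} [Ring Λ] [AddCommGroup B] [Module Λ B] [AddCommGroup U] [Module Λ U]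

lemma aux_inj_comp_subtype (g : B →ₗ[Λ] U) {Si : Submodule Λ B}
    (hd : Disjoint Si (LinearMap.ker g)) : Function.Injective (g ∘ₗ Si.subtype) := by
  rw [← LinearMap.ker_eq_bot, LinearMap.ker_comp, Submodule.eq_bot_iff]
  intro x hx
  have hmem : (x : B) ∈ Si ⊓ LinearMap.ker g :=
    ⟨x.2, by simpa [Submodule.mem_comap] using hx⟩
  rw [disjoint_iff.mp hd, Submodule.mem_bot] at hmem
  exact Subtype.ext hmem

lemma aux_isAtom_map (g : B →ₗ[Λ] U) {Si : Submodule Λ B} (h : IsAtom Si)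
    (hd : Disjoint Si (LinearMap.ker g)) : IsAtom (Submodule.map g Si) := by
  have hinj := aux_inj_comp_subtype g hd
  have hr : LinearMap.range (g ∘ₗ Si.subtype) = Submodule.map g Si := by
    rw [LinearMap.range_comp, Submodule.range_subtype]
  haveI : IsSimpleModule Λ ↥Si := isSimpleModule_iff_isAtom.mpr h
  rw [← isSimpleModule_iff_isAtom, ← hr]
  exact IsSimpleModule.congr (LinearEquiv.ofInjective _ hinj).symm

lemma aux_corrected (g : B →ₗ[Λ] U) {Si Si0 : Submodule Λ B}
    (hSi : IsAtom Si) (hd : Disjoint Si Si0)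
    (hle : Submodule.map g Si ≤ Submodule.map g Si0)
    (hd0 : Disjoint Si0 (LinearMap.ker g)) :
    ∃ S' : Submodule Λ B, IsAtom S' ∧ S' ≤ LinearMap.ker g ∧
      ∀ x ∈ S', ∃ y ∈ Si, ∃ c ∈ Si0, x = y - c ∧ (y = 0 → x = 0) := by
  set k0 : ↥Si0 →ₗ[Λ] U := g ∘ₗ Si0.subtype with hk0def
  have hk0inj : Function.Injective k0 := aux_inj_comp_subtype g hd0
  set ki : ↥Si →ₗ[Λ] U := g ∘ₗ Si.subtype with hkidef
  have hrange : ∀ x : ↥Si, ki x ∈ LinearMap.range k0 := by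
    intro x
    have h1 : ki x ∈ Submodule.map g Si := ⟨x, x.2, rfl⟩
    have h2 : Submodule.map g Si0 = LinearMap.range k0 := by
      rw [hk0def, LinearMap.range_comp, Submodule.range_subtype]
    exact h2 ▸ hle h1
  set r : ↥Si →ₗ[Λ] ↥(LinearMap.range k0) := LinearMap.codRestrict _ ki hrange with hrdef
  set h : ↥Si →ₗ[Λ] ↥Si0 :=
    ((LinearEquiv.ofInjective k0 hk0inj).symm : ↥(LinearMap.range k0) →ₗ[Λ] ↥Si0) ∘ₗ r with hhdef
  have hkey : ∀ x : ↥Si, k0 (h x) = ki x := by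
    intro x
    have h1 := congrArg (Subtype.val)
      ((LinearEquiv.ofInjective k0 hk0inj).apply_symm_apply (r x))
    rw [LinearEquiv.ofInjective_apply] at h1
    exact h1
  set θ : ↥Si →ₗ[Λ] B := Si.subtype - Si0.subtype ∘ₗ h with hθdef
  have hθapp : ∀ x : ↥Si, θ x = (x : B) - ((h x : ↥Si0) : B) := by
    intro x; simp [hθdef]
  have hθinj : Function.Injective θ := by
    rw [← LinearMap.ker_eq_bot, Submodule.eq_bot_iff]
    intro x hx
    have hx' : (x : B) = ((h x : ↥Si0) : B) := by
      have h2 := LinearMap.mem_ker.mp hx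
      rw [hθapp x, sub_eq_zero] at h2
      exact h2
    have hmem : (x : B) ∈ Si ⊓ Si0 := ⟨x.2, hx' ▸ (h x).2⟩
    rw [disjoint_iff.mp hd, Submodule.mem_bot] at hmem
    exact Subtype.ext hmem
  refine ⟨LinearMap.range θ, ?_, ?_, ?_⟩
  · haveI : IsSimpleModule Λ ↥Si := isSimpleModule_iff_isAtom.mpr hSi
    rw [← isSimpleModule_iff_isAtom]
    exact IsSimpleModule.congr (LinearEquiv.ofInjective θ hθinj).symm
  · rintro x ⟨y, rfl⟩
    rw [LinearMap.mem_ker, hθapp y, map_sub]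
    have : g ((h y : ↥Si0) : B) = k0 (h y) := rfl
    rw [this, hkey y]
    have : g ((y : ↥Si) : B) = ki y := rfl
    rw [this, sub_self]
  · rintro x ⟨y, rfl⟩
    refine ⟨(y : B), y.2, ((h y : ↥Si0) : B), (h y).2, hθapp y, ?_⟩
    intro hy0
    have : y = 0 := Subtype.ext hy0
    rw [this, map_zero]

end AuxBoundProof

/-- For an almost split sequence `0 → A → B → U → 0` of finite-dimensional modules over a
finite-dimensional algebra with `U` uniserial, the number of indecomposable direct summands
in any internal direct sum decomposition of `B` is at most `length(soc A) + 1`. -/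
theorem card_summands_le_length_socle_add_one
    (K Λ A B U : Type) [Field K] [Ring Λ] [Algebra K Λ] [FiniteDimensional K Λ]
    [AddCommGroup A] [Module Λ A] [Module.Finite Λ A]
    [AddCommGroup B] [Module Λ B] [Module.Finite Λ B]
    [AddCommGroup U] [Module Λ U] [Module.Finite Λ U]
    (hU : IsUniserialModule Λ U)
    (f : A →ₗ[Λ] B) (g : B →ₗ[Λ] U) (hseq : IsAlmostSplitSequence f g)
    (I : Type) [DecidableEq I] (B' : I → Submodule Λ B)
    (hint : DirectSum.IsInternal B')
    (hind : ∀ i, IsIndecomposableModule Λ ↥(B' i)) :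
    (Nat.card I : WithBot ℕ∞) ≤ moduleLength Λ ↥(socle Λ A) + 1 := by
  classical
  obtain ⟨hf, -, hfg, -, -, -, -⟩ := hseq
  have htriv : (0 : WithBot ℕ∞) ≤ moduleLength Λ ↥(socle Λ A) + 1 := by
    have h0 : (0 : WithBot ℕ∞) ≤ moduleLength Λ ↥(socle Λ A) :=
      Order.krullDim_nonneg
    have h1 : (0 : WithBot ℕ∞) ≤ 1 := by norm_num
    calc (0 : WithBot ℕ∞) = 0 + 0 := by simp
    _ ≤ moduleLength Λ ↥(socle Λ A) + 1 := add_le_add h0 h1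
  by_cases hfin : Finite I
  swap
  · haveI : Infinite I := not_finite_iff_infinite.mp hfin
    rw [Nat.card_eq_zero_of_infinite]
    simpa using htriv
  rcases isEmpty_or_nonempty I with hI | hI
  · rw [Nat.card_of_isEmpty]
    simpa using htriv
  haveI : IsArtinianRing Λ := isArtinian_of_tower K inferInstance
  haveI : IsArtinian Λ B := inferInstance
  have hInd := hint.submodule_iSupIndep
  -- pick an atom inside each summand
  have hSex : ∀ i : I, ∃ Si : Submodule Λ B, IsAtom Si ∧ Si ≤ B' i := by
    intro i
    rcases eq_bot_or_exists_atom_le (B' i) with hbot | h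
    · exact absurd hbot ((Submodule.nontrivial_iff_ne_bot).mp (hind i).1)
    · exact h
  choose S hSatom hSle using hSex
  -- any atom not inside ker g is disjoint from ker g
  have hdis : ∀ i, Submodule.map g (S i) ≠ ⊥ → Disjoint (S i) (LinearMap.ker g) := by
    intro i hi
    rcases (hSatom i).le_iff.mp (inf_le_left : S i ⊓ LinearMap.ker g ≤ S i) with h | h
    · exact disjoint_iff.mpr h
    · exact absurd (LinearMap.le_ker_iff_map.mp (inf_eq_left.mp h)) hi
  -- choose i0
  obtain ⟨i0, hcond⟩ : ∃ i0 : I, ∀ i : I, Submodule.map g (S i) ≠ ⊥ →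
      Submodule.map g (S i) ≤ Submodule.map g (S i0) ∧ Disjoint (S i0) (LinearMap.ker g) := by
    by_cases hex : ∃ i, Submodule.map g (S i) ≠ ⊥
    · obtain ⟨i0, hi0⟩ := hex
      have hd0 := hdis i0 hi0
      refine ⟨i0, fun i hi => ⟨?_, hd0⟩⟩
      have hai : IsAtom (Submodule.map g (S i)) := aux_isAtom_map g (hSatom i) (hdis i hi)
      have ha0 : IsAtom (Submodule.map g (S i0)) := aux_isAtom_map g (hSatom i0) hd0
      rcases hU (Submodule.map g (S i)) (Submodule.map g (S i0)) with h | h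
      · exact h
      · rcases hai.le_iff.mp h with h' | h'
        · exact absurd h' hi0
        · exact le_of_eq h'.symm
    · push_neg at hex
      exact ⟨hI.some, fun i hi => absurd (hex i) hi⟩
  -- corrected atoms inside ker g, for each j ≠ i0
  have key : ∀ j : I, j ≠ i0 → ∃ S' : Submodule Λ B, IsAtom S' ∧ S' ≤ LinearMap.ker g ∧
      ∀ x ∈ S', ∃ y ∈ S j, ∃ c ∈ S i0, x = y - c ∧ (y = 0 → x = 0) := by
    intro j hj
    by_cases hb : Submodule.map g (S j) = ⊥
    · exact ⟨S j, hSatom j, LinearMap.le_ker_iff_map.mpr hb,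
        fun x hx => ⟨x, hx, 0, (S i0).zero_mem, by simp, fun h => h⟩⟩
    · obtain ⟨hle, hd0⟩ := hcond j hb
      have hdd : Disjoint (S j) (S i0) :=
        (hInd.pairwiseDisjoint hj).mono (hSle j) (hSle i0)
      exact aux_corrected g (hSatom j) hdd hle hd0
  choose S' hatom hker hdec using fun j : {j : I // j ≠ i0} => key j j.2
  -- cardinalities
  haveI := Fintype.ofFinite I
  set m := Nat.card I - 1 with hm
  have hn1 : 1 ≤ Nat.card I := Nat.one_le_iff_ne_zero.mpr (Nat.card_ne_zero.mpr ⟨hI, hfin⟩)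
  have hcard : Fintype.card {j : I // j ≠ i0} = m := by
    rw [hm, Nat.card_eq_fintype_card]
    have h1 := Fintype.card_subtype_compl (fun j : I => j = i0)
    simp only [Fintype.card_subtype_eq] at h1; exact h1
  let e : Fin m ≃ {j : I // j ≠ i0} := (Fintype.equivFinOfCardEq hcard).symm
  -- pull back to A
  have hkerrange : ∀ j, S' j ≤ LinearMap.range f := fun j => hfg ▸ hker j
  set W : {j : I // j ≠ i0} → Submodule Λ A := fun j => Submodule.comap f (S' j) with hW
  have hmapW : ∀ j, Submodule.map f (W j) = S' j := by
    intro j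
    rw [hW, Submodule.map_comap_eq]
    exact inf_eq_right.mpr (hkerrange j)
  have hWsimple : ∀ j, IsSimpleModule Λ ↥(W j) := by
    intro j
    haveI : IsSimpleModule Λ ↥(S' j) := isSimpleModule_iff_isAtom.mpr (hatom j)
    have e' : ↥(W j) ≃ₗ[Λ] ↥(Submodule.map f (W j)) := Submodule.equivMapOfInjective f hf (W j)
    rw [hmapW j] at e'
    exact IsSimpleModule.congr e'
  have hWsoc : ∀ j, W j ≤ socle Λ A := fun j => le_sSup (hWsimple j)
  -- no corrected atom is inside the sup of the other summands
  have hvanish : ∀ j : {j : I // j ≠ i0},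
      ¬ S' j ≤ ⨆ i, ⨆ _ : i ≠ (j : I), B' i := by
    intro j hle'
    obtain ⟨x, hx, hx0⟩ := (Submodule.ne_bot_iff _).mp (hatom j).1
    obtain ⟨y, hy, c, hc, hxyc, hy0⟩ := hdec j x hx
    have hi0ne : i0 ≠ (j : I) := Ne.symm j.2
    have hcN : c ∈ ⨆ i, ⨆ _ : i ≠ (j : I), B' i :=
      Submodule.mem_iSup_of_mem i0 (Submodule.mem_iSup_of_mem hi0ne (hSle i0 hc))
    have hyx : y = x + c := by
      have := hxyc.symm
      rw [sub_eq_iff_eq_add] at this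
      exact this
    have hyN : y ∈ ⨆ i, ⨆ _ : i ≠ (j : I), B' i := by
      rw [hyx]; exact Submodule.add_mem _ (hle' hx) hcN
    have hyB : y ∈ B' (j : I) := hSle (j : I) hy
    have hy00 : y = 0 := by
      have hb := (hInd (j : I)).le_bot (Submodule.mem_inf.mpr ⟨hyB, hyN⟩)
      simpa using hb
    exact hx0 (hy0 hy00)
  have hS'le : ∀ j : {j : I // j ≠ i0}, S' j ≤ B' (j : I) ⊔ B' i0 := by
    intro j x hx
    obtain ⟨y, hy, c, hc, hxyc, -⟩ := hdec j x hx
    rw [hxyc]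
    exact Submodule.sub_mem _ (Submodule.mem_sup_left (hSle (j : I) hy))
      (Submodule.mem_sup_right (hSle i0 hc))
  -- the chain in A
  set D : Fin (m+1) → Submodule Λ A :=
    fun p => ⨆ k : Fin m, ⨆ _ : (k : ℕ) < (p : ℕ), W (e k) with hD
  have hDle : ∀ p, D p ≤ socle Λ A := fun p => iSup₂_le fun k _ => hWsoc (e k)
  have hDmono : Monotone D := by
    intro p q hpq
    exact iSup₂_le fun k hk => le_iSup₂_of_le k (lt_of_lt_of_le hk hpq) le_rfl
  have hSD : ∀ (p : Fin (m+1)) (k : Fin m), (k : ℕ) < (p : ℕ) → W (e k) ≤ D p :=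
    fun p k hk => le_iSup₂_of_le k hk le_rfl
  have hDstrict : StrictMono D := by
    intro p q hpq
    have hpq' : (p : ℕ) < (q : ℕ) := hpq
    have hkm : (p : ℕ) < m := lt_of_lt_of_le hpq' (Nat.lt_succ_iff.mp q.isLt)
    set k : Fin m := ⟨(p : ℕ), hkm⟩ with hk
    have hWk : ¬ W (e k) ≤ D p := by
      intro hle'
      apply hvanish (e k)
      have h2 : Submodule.map f (D p) ≤ ⨆ i, ⨆ _ : i ≠ ((e k : {j : I // j ≠ i0}) : I), B' i := by
        rw [hD]
        simp only [Submodule.map_iSup]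
        refine iSup₂_le fun k' hk' => ?_
        rw [hmapW (e k')]
        refine (hS'le (e k')).trans (sup_le ?_ ?_)
        · have hne : ((e k' : {j : I // j ≠ i0}) : I) ≠ ((e k : {j : I // j ≠ i0}) : I) := by
            intro hcc
            have hkk : k' = k := e.injective (Subtype.ext hcc)
            rw [hkk] at hk'
            exact absurd hk' (lt_irrefl _)
          exact le_iSup₂_of_le ((e k' : {j : I // j ≠ i0}) : I) hne le_rfl
        · exact le_iSup₂_of_le i0 (Ne.symm (e k).2) le_rfl
      have h3 : S' (e k) ≤ Submodule.map f (D p) := by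
        rw [← hmapW (e k)]
        exact Submodule.map_mono hle'
      exact h3.trans h2
    refine lt_of_le_of_ne (hDmono hpq.le) fun heq => hWk ?_
    rw [heq]
    exact hSD q k hpq'
  -- the chain in the socle
  set E : Fin (m+1) → Submodule Λ ↥(socle Λ A) :=
    fun p => Submodule.comap (socle Λ A).subtype (D p) with hE
  have hEstrict : StrictMono E := by
    intro p q hpq
    refine lt_of_le_of_ne (Submodule.comap_mono (hDmono hpq.le)) fun heq => (hDstrict hpq).ne ?_
    have h1 := congrArg (Submodule.map (socle Λ A).subtype) heq
    rwa [hE, Submodule.map_comap_subtype, Submodule.map_comap_subtype,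
      inf_eq_right.mpr (hDle p), inf_eq_right.mpr (hDle q)] at h1
  let P : LTSeries (Submodule Λ ↥(socle Λ A)) :=
    ⟨m, E, fun i => hEstrict i.castSucc_lt_succ⟩
  have hkrull : (m : WithBot ℕ∞) ≤ moduleLength Λ ↥(socle Λ A) := by
    have hlen := Order.LTSeries.length_le_krullDim P
    simpa [moduleLength] using hlen
  have hcast : (Nat.card I : WithBot ℕ∞) = (m : WithBot ℕ∞) + 1 := by
    have hnm : Nat.card I = m + 1 := by omega
    rw [hnm]
    push_cast
    ring
  rw [hcast]
  exact add_le_add_left hkrull 1
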